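/- Let f : ℝ → ℝ be convex with f(0) = 0, differentiable at 0 with f'(0) = 0, and with second-order expansion f(t) = (A/2)t² + o(t²), A ≥ 0. For t₁ < 0 < t₃ and t₂ = 0, let p_i = (t_i, f(t_i)) and let 𝒜 be the area of the triangle p₁p₂p₃. Then 4𝒜/(|p₁p₂|·|p₂p₃|·|p₃p₁|) → A as t₁ → 0⁻ and t₃ → 0⁺. That is, the osculating (Menger) curvature of the graph of f at the origin equals A. -/

import Mathlib

open Real Filter Set
open scoped Topology

/-- The Menger (osculating) curvature `χ₀(p,q,r) = 4·Area(△pqr)/(|pq||qr||rp|)`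
of three points in `ℝ²`, the area being computed by the cross-product formula. -/
noncomputable def mengerPts (p q r : ℝ × ℝ) : ℝ :=
  2 * |(q.1 - p.1) * (r.2 - p.2) - (q.2 - p.2) * (r.1 - p.1)| /
    (dist p q * dist q r * dist r p)

/-- **Osculating curvature of a convex graph** (Proposition A.1 of the paper): if `f` is
convex with `f 0 = 0`, `f'(0) = 0` and `f(t) = (A/2)t² + o(t²)` with `A ≥ 0`, then the
Menger curvature of `(t₁, f t₁)`, `(0,0)`, `(t₃, f t₃)` tends to `A` as `t₁ → 0⁻`,
`t₃ → 0⁺`. -/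
theorem osculating_curvature_of_graph
    (f : ℝ → ℝ) (A : ℝ) (hA : 0 ≤ A)
    (hconv : ConvexOn ℝ Set.univ f)
    (hf0 : f 0 = 0)
    (hd : HasDerivAt f 0 0)
    (hf2 : (fun t => f t - A / 2 * t ^ 2) =o[𝓝 0] fun t => t ^ 2) :
    Tendsto (fun p : ℝ × ℝ => mengerPts (p.1, f p.1) (0, 0) (p.2, f p.2))
      ((𝓝[<] (0 : ℝ)) ×ˢ (𝓝[>] (0 : ℝ))) (𝓝 A) := by
  set F := (𝓝[<] (0 : ℝ)) ×ˢ (𝓝[>] (0 : ℝ)) with hF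
  set g : ℝ → ℝ := fun t => (f t - A / 2 * t ^ 2) / t ^ 2 with hg
  have hgt : Tendsto g (𝓝 0) (𝓝 0) := hf2.tendsto_div_nhds_zero
  -- slope tends to 0
  have hslope : Tendsto (fun t => f t / t) (𝓝[≠] (0:ℝ)) (𝓝 0) := by
    have h := hasDerivAt_iff_tendsto_slope.mp hd
    refine Tendsto.congr ?_ h
    intro t
    simp [slope_def_field, hf0]
  -- eventually |f t| ≤ |t|
  have habs1 : ∀ᶠ x in 𝓝 (0:ℝ), |x| ≤ 1 := by
    filter_upwards [Metric.ball_mem_nhds (0:ℝ) one_pos] with x hx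
    rw [Metric.mem_ball, Real.dist_eq, sub_zero] at hx
    exact le_of_lt hx
  have hsmall : ∀ᶠ t in 𝓝[≠] (0:ℝ), |f t| ≤ |t| := by
    filter_upwards [hslope.eventually habs1, self_mem_nhdsWithin] with t ht ht0
    rw [abs_div, div_le_one (abs_pos.mpr ht0)] at ht
    exact ht
  have hs1 : ∀ᶠ t in 𝓝[<] (0:ℝ), t < 0 ∧ |f t| ≤ |t| :=
    (hsmall.filter_mono (nhdsWithin_mono _ (fun x hx => ne_of_lt hx))).and
      self_mem_nhdsWithin |>.mono (fun t h => ⟨h.2, h.1⟩)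
  have hs3 : ∀ᶠ t in 𝓝[>] (0:ℝ), 0 < t ∧ |f t| ≤ |t| :=
    (hsmall.filter_mono (nhdsWithin_mono _ (fun x hx => ne_of_gt hx))).and
      self_mem_nhdsWithin |>.mono (fun t h => ⟨h.2, h.1⟩)
  have hev : ∀ᶠ p : ℝ × ℝ in F,
      (p.1 < 0 ∧ |f p.1| ≤ |p.1|) ∧ (0 < p.2 ∧ |f p.2| ≤ |p.2|) :=
    (hs1.prod_inl _).and (hs3.prod_inr _)
  -- the simplified expression
  set w : ℝ × ℝ → ℝ := fun p => (p.1 * g p.1 - p.2 * g p.2) / (p.1 - p.2) with hw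
  -- eventual equality
  have heq : (fun p : ℝ × ℝ => mengerPts (p.1, f p.1) (0, 0) (p.2, f p.2))
      =ᶠ[F] fun p => 2 * |A / 2 + w p| := by
    filter_upwards [hev] with p hp
    obtain ⟨⟨ht1, hb1⟩, ht3, hb3⟩ := hp
    set t₁ := p.1
    set t₃ := p.2
    have h13 : t₁ - t₃ ≠ 0 := by intro h; nlinarith
    have habs13 : |t₁ - t₃| = t₃ - t₁ := by
      rw [abs_of_neg (by linarith)]; ring
    have d1 : dist ((t₁ : ℝ), f t₁) ((0:ℝ), (0:ℝ)) = |t₁| := by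
      rw [Prod.dist_eq]
      simp only [Real.dist_eq, sub_zero]
      exact max_eq_left hb1
    have d2 : dist ((0:ℝ), (0:ℝ)) ((t₃ : ℝ), f t₃) = t₃ := by
      rw [Prod.dist_eq]
      simp only [Real.dist_eq, zero_sub, abs_neg]
      rw [max_eq_left hb3, abs_of_pos ht3]
    have d3 : dist ((t₃ : ℝ), f t₃) ((t₁ : ℝ), f t₁) = t₃ - t₁ := by
      rw [Prod.dist_eq]
      simp only [Real.dist_eq]
      have h1 : |t₃ - t₁| = t₃ - t₁ := abs_of_pos (by linarith)
      have h2 : |f t₃ - f t₁| ≤ t₃ - t₁ := by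
        calc |f t₃ - f t₁| ≤ |f t₃| + |f t₁| := abs_sub _ _
          _ ≤ |t₃| + |t₁| := add_le_add hb3 hb1
          _ = t₃ - t₁ := by rw [abs_of_pos ht3, abs_of_neg ht1]; ring
      rw [max_eq_left (by rw [h1]; exact h2), h1]
    have ht1' : t₁ ≠ 0 := ne_of_lt ht1
    have ht3' : t₃ ≠ 0 := ne_of_gt ht3
    have e₁ : f t₁ = A / 2 * t₁ ^ 2 + g t₁ * t₁ ^ 2 := by
      simp only [hg]
      rw [div_mul_cancel₀ _ (pow_ne_zero 2 ht1')]; ring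
    have e₃ : f t₃ = A / 2 * t₃ ^ 2 + g t₃ * t₃ ^ 2 := by
      simp only [hg]
      rw [div_mul_cancel₀ _ (pow_ne_zero 2 ht3')]; ring
    have key : (0 - t₁) * (f t₃ - f t₁) - (0 - f t₁) * (t₃ - t₁)
        = (t₁ * t₃ * (t₁ - t₃)) * (A / 2 + w p) := by
      rw [e₁, e₃, hw]
      show _ = (t₁ * t₃ * (t₁ - t₃)) * (A / 2 + (t₁ * g t₁ - t₃ * g t₃) / (t₁ - t₃))
      field_simp
      ring
    unfold mengerPts
    simp only
    rw [d1, d2, d3, key, abs_mul, abs_mul, abs_mul, habs13,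
      abs_of_pos ht3]
    have hpos1 : (0:ℝ) < |t₁| := abs_pos.mpr (ne_of_lt ht1)
    have hpos3 : (0:ℝ) < t₃ := ht3
    have hpos13 : (0:ℝ) < t₃ - t₁ := by linarith
    field_simp
  refine Tendsto.congr' heq.symm ?_
  -- limit of the simplified expression
  have hfst : Tendsto (fun p : ℝ × ℝ => p.1) F (𝓝 0) :=
    tendsto_fst.mono_right nhdsWithin_le_nhds
  have hsnd : Tendsto (fun p : ℝ × ℝ => p.2) F (𝓝 0) :=
    tendsto_snd.mono_right nhdsWithin_le_nhds
  have hbound : ∀ᶠ p : ℝ × ℝ in F, ‖w p‖ ≤ |g p.1| + |g p.2| := by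
    filter_upwards [hev] with p hp
    obtain ⟨⟨ht1, _⟩, ht3, _⟩ := hp
    rw [hw]
    simp only [Real.norm_eq_abs, abs_div]
    have habs13 : |p.1 - p.2| = p.2 - p.1 := by
      rw [abs_of_neg (by linarith)]; ring
    rw [habs13, div_le_iff₀ (by linarith)]
    have h1 : |p.1 * g p.1 - p.2 * g p.2| ≤ |p.1| * |g p.1| + |p.2| * |g p.2| := by
      calc |p.1 * g p.1 - p.2 * g p.2| ≤ |p.1 * g p.1| + |p.2 * g p.2| := abs_sub _ _
        _ = |p.1| * |g p.1| + |p.2| * |g p.2| := by rw [abs_mul, abs_mul]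
    have ha1 : |p.1| = -p.1 := abs_of_neg ht1
    have ha3 : |p.2| = p.2 := abs_of_pos ht3
    nlinarith [abs_nonneg (g p.1), abs_nonneg (g p.2)]
  have hgz : Tendsto (fun p : ℝ × ℝ => |g p.1| + |g p.2|) F (𝓝 0) := by
    have h1 : Tendsto (fun p : ℝ × ℝ => |g p.1|) F (𝓝 0) := by
      simpa using (hgt.comp hfst).abs
    have h2 : Tendsto (fun p : ℝ × ℝ => |g p.2|) F (𝓝 0) := by
      simpa using (hgt.comp hsnd).abs
    simpa using h1.add h2
  have hwz : Tendsto w F (𝓝 0) := squeeze_zero_norm' hbound hgz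
  have : Tendsto (fun p : ℝ × ℝ => 2 * |A / 2 + w p|) F (𝓝 (2 * |A / 2 + 0|)) :=
    ((hwz.const_add (A / 2)).abs.const_mul 2)
  convert this using 2
  rw [add_zero, abs_of_nonneg (by linarith)]
  ring
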